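/- arXiv:1008.3716 — 2 statements merged into one kernel-verified Lean document; each statement's English description precedes it below -/
import Mathlib

section
/- Let y_F be the linear chain with nearest-neighbor spacing Fε, let f ∈ 𝒰̃, and let u^a ∈ 𝒰̃ satisfy δE^a(y_F)[v] + δ²E^a(y_F)[u^a, v] = ⟨f, v⟩ for all v ∈ 𝒰̃. Then for every v ∈ 𝒰̃, | δE^CB(y_F)[v] + δ²E^CB(y_F)[u^a, v] − ⟨f, v⟩ | ≤ ε² |φ''(2F)| ‖(u^a)'''‖_{ℓ²_ε} ‖v'‖_{ℓ²_ε}. -/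
noncomputable section

open Real Finset

/-- Euclidean norm on `ℝ × ℝ`. -/
def enorm2 (v : ℝ × ℝ) : ℝ := Real.sqrt (v.1 ^ 2 + v.2 ^ 2)

/-- Euclidean dot product on `ℝ × ℝ`. -/
def edot (v w : ℝ × ℝ) : ℝ := v.1 * w.1 + v.2 * w.2

/-- `N`-periodic mean-zero displacements (the space `𝒰`). -/
def IsDisp (N : ℕ) (u : ℤ → ℝ × ℝ) : Prop :=
  (∀ ℓ : ℤ, u (ℓ + (N : ℤ)) = u ℓ) ∧ ∑ ℓ ∈ Finset.Icc (1 : ℤ) (N : ℤ), u ℓ = 0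

/-- Constrained displacements (the space `𝒰̃`): second component vanishes. -/
def IsDisp1D (N : ℕ) (u : ℤ → ℝ × ℝ) : Prop :=
  IsDisp N u ∧ ∀ ℓ : ℤ, (u ℓ).2 = 0

/-- Backward difference `u'_ℓ = (u_ℓ - u_{ℓ-1})/ε`. -/
def bd (ε : ℝ) (u : ℤ → ℝ × ℝ) (ℓ : ℤ) : ℝ × ℝ := ε⁻¹ • (u ℓ - u (ℓ - 1))

/-- The inner product `⟨v,w⟩ = ε ∑_{ℓ=1}^N v_ℓ · w_ℓ`. -/
def ip (N : ℕ) (ε : ℝ) (v w : ℤ → ℝ × ℝ) : ℝ :=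
  ε * ∑ ℓ ∈ Finset.Icc (1 : ℤ) (N : ℤ), edot (v ℓ) (w ℓ)

/-- The norm `‖v‖_{ℓ²_ε}`. -/
def nrm (N : ℕ) (ε : ℝ) (v : ℤ → ℝ × ℝ) : ℝ :=
  Real.sqrt (ε * ∑ ℓ ∈ Finset.Icc (1 : ℤ) (N : ℤ), (enorm2 (v ℓ)) ^ 2)

/-- The atomistic energy `E^a`. -/
def Ea (N : ℕ) (ε : ℝ) (φ : ℝ → ℝ) (y : ℤ → ℝ × ℝ) : ℝ :=
  ε * ∑ ℓ ∈ Finset.Icc (1 : ℤ) (N : ℤ),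
    (φ (enorm2 (bd ε y ℓ)) + φ (enorm2 (bd ε y (ℓ + 1) + bd ε y ℓ)))

/-- The Cauchy–Born energy `E^CB`. -/
def ECB (N : ℕ) (ε : ℝ) (φ : ℝ → ℝ) (y : ℤ → ℝ × ℝ) : ℝ :=
  ε * ∑ ℓ ∈ Finset.Icc (1 : ℤ) (N : ℤ),
    (φ (enorm2 (bd ε y ℓ)) + φ (2 * enorm2 (bd ε y ℓ)))

/-- The bond-angle energy `E^b`. -/
def Eb (N : ℕ) (ε α : ℝ) (y : ℤ → ℝ × ℝ) : ℝ :=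
  ε * ∑ ℓ ∈ Finset.Icc (1 : ℤ) (N : ℤ),
    α * (1 - edot (bd ε y (ℓ + 1)) (bd ε y ℓ) /
      (enorm2 (bd ε y (ℓ + 1)) * enorm2 (bd ε y ℓ)))

/-- The quasi-nonlocal energy `E^QNL`. -/
def EQNL (N K : ℕ) (ε : ℝ) (φ : ℝ → ℝ) (y : ℤ → ℝ × ℝ) : ℝ :=
  ε * ∑ ℓ ∈ Finset.Icc (1 : ℤ) (N : ℤ), φ (enorm2 (bd ε y ℓ))
  + ε * ∑ ℓ ∈ Finset.Icc (1 : ℤ) (K : ℤ), φ (enorm2 (bd ε y (ℓ + 1) + bd ε y ℓ))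
  + ε * ∑ ℓ ∈ Finset.Icc ((K : ℤ) + 2) (N : ℤ), φ (2 * enorm2 (bd ε y ℓ))
  + ε / 2 * φ (2 * enorm2 (bd ε y 1)) + ε / 2 * φ (2 * enorm2 (bd ε y ((K : ℤ) + 1)))

/-- First variation `δE(y)[u] = (d/dt) E(y + t u) |_{t=0}`. -/
def dE (E : (ℤ → ℝ × ℝ) → ℝ) (y u : ℤ → ℝ × ℝ) : ℝ :=
  deriv (fun t : ℝ => E (fun ℓ => y ℓ + t • u ℓ)) 0

/-- Second variation `δ²E(y)[u,v] = (∂²/∂t∂s) E(y + t u + s v) |_{t=s=0}`. -/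
def d2E (E : (ℤ → ℝ × ℝ) → ℝ) (y u v : ℤ → ℝ × ℝ) : ℝ :=
  deriv (fun s : ℝ => deriv (fun t : ℝ => E (fun ℓ => y ℓ + t • u ℓ + s • v ℓ)) 0) 0

/-- The linear chain `y_{F,ℓ} = (Fεℓ, 0)`. -/
def yLin (ε F : ℝ) : ℤ → ℝ × ℝ := fun ℓ => (F * ε * ℓ, 0)

/-- The uniform circular chain of radius `R = Fε/(2 sin(πε))`. -/
def yCirc (ε F : ℝ) : ℤ → ℝ × ℝ := fun ℓ =>
  (F * ε / (2 * Real.sin (π * ε)) * Real.cos (2 * π * ε * ℓ),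
   F * ε / (2 * Real.sin (π * ε)) * Real.sin (2 * π * ε * ℓ))


/-! ### Auxiliary lemmas -/

lemma phi_diff {φ : ℝ → ℝ} (hφ : ContDiffOn ℝ 2 φ (Set.Ioi 0)) {c : ℝ} (hc : 0 < c) :
    DifferentiableAt ℝ φ c :=
  (hφ.contDiffAt (isOpen_Ioi.mem_nhds hc)).differentiableAt two_ne_zero

lemma dphi_diff {φ : ℝ → ℝ} (hφ : ContDiffOn ℝ 2 φ (Set.Ioi 0)) {c : ℝ} (hc : 0 < c) :
    DifferentiableAt ℝ (deriv φ) c :=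
  (((hφ.deriv_of_isOpen (m := 1) isOpen_Ioi (by norm_num)).contDiffAt
    (isOpen_Ioi.mem_nhds hc)).differentiableAt one_ne_zero)

lemma ev_pos {c b : ℝ} (hc : 0 < c) : ∀ᶠ s : ℝ in nhds 0, 0 < c + s * b := by
  have hcont : Continuous (fun s : ℝ => c + s * b) := by continuity
  have h : ∀ᶠ x : ℝ in nhds (c + 0 * b), 0 < x := eventually_gt_nhds (by simpa using hc)
  exact (hcont.continuousAt (x := 0)).eventually h

lemma hasDeriv_abs {φ : ℝ → ℝ} (hφ : ContDiffOn ℝ 2 φ (Set.Ioi 0)) {c : ℝ} (hc : 0 < c) (a : ℝ) :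
    HasDerivAt (fun t : ℝ => φ |c + t * a|) (deriv φ c * a) 0 := by
  have h1 : HasDerivAt (fun t : ℝ => c + t * a) a 0 := by
    simpa using ((hasDerivAt_id (0:ℝ)).mul_const a).const_add c
  have h0 : HasDerivAt φ (deriv φ c) (c + 0 * a) := by
    simpa using (phi_diff hφ hc).hasDerivAt
  have h2 : HasDerivAt (fun t : ℝ => φ (c + t * a)) (deriv φ c * a) 0 := h0.comp 0 h1
  refine h2.congr_of_eventuallyEq ?_
  filter_upwards [ev_pos hc (b := a)] with t ht
  rw [abs_of_pos ht]

lemma hasDeriv_dphi {φ : ℝ → ℝ} (hφ : ContDiffOn ℝ 2 φ (Set.Ioi 0)) {c : ℝ} (hc : 0 < c) (b : ℝ) :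
    HasDerivAt (fun s : ℝ => deriv φ (c + s * b)) (deriv (deriv φ) c * b) 0 := by
  have h1 : HasDerivAt (fun s : ℝ => c + s * b) b 0 := by
    simpa using ((hasDerivAt_id (0:ℝ)).mul_const b).const_add c
  have h0 : HasDerivAt (deriv φ) (deriv (deriv φ) c) (c + 0 * b) := by
    simpa using (dphi_diff hφ hc).hasDerivAt
  exact h0.comp 0 h1

lemma hasDeriv_sum {φ : ℝ → ℝ} (hφ : ContDiffOn ℝ 2 φ (Set.Ioi 0)) (ε : ℝ) (S : Finset ℤ)
    (c1 c2 a1 a2 : ℤ → ℝ) (h1 : ∀ ℓ ∈ S, 0 < c1 ℓ) (h2 : ∀ ℓ ∈ S, 0 < c2 ℓ) :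
    HasDerivAt (fun t : ℝ => ε * ∑ ℓ ∈ S, (φ |c1 ℓ + t * a1 ℓ| + φ |c2 ℓ + t * a2 ℓ|))
      (ε * ∑ ℓ ∈ S, (deriv φ (c1 ℓ) * a1 ℓ + deriv φ (c2 ℓ) * a2 ℓ)) 0 :=
  HasDerivAt.const_mul ε (HasDerivAt.fun_sum fun ℓ hℓ =>
    (hasDeriv_abs hφ (h1 ℓ hℓ) (a1 ℓ)).add (hasDeriv_abs hφ (h2 ℓ hℓ) (a2 ℓ)))

lemma deriv2_sum {φ : ℝ → ℝ} (hφ : ContDiffOn ℝ 2 φ (Set.Ioi 0)) {ε : ℝ} (S : Finset ℤ)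
    {c1 c2 : ℝ} (hc1 : 0 < c1) (hc2 : 0 < c2) (a1 a2 b1 b2 : ℤ → ℝ) :
    deriv (fun s : ℝ => deriv (fun t : ℝ =>
        ε * ∑ ℓ ∈ S, (φ |(c1 + s * b1 ℓ) + t * a1 ℓ| + φ |(c2 + s * b2 ℓ) + t * a2 ℓ|)) 0) 0
      = ε * ∑ ℓ ∈ S, (deriv (deriv φ) c1 * b1 ℓ * a1 ℓ + deriv (deriv φ) c2 * b2 ℓ * a2 ℓ) := by
  have hev : ∀ᶠ s : ℝ in nhds 0, ∀ ℓ ∈ S, 0 < c1 + s * b1 ℓ ∧ 0 < c2 + s * b2 ℓ := by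
    rw [Filter.eventually_all_finset]
    intro ℓ _
    exact (ev_pos hc1 (b := b1 ℓ)).and (ev_pos hc2 (b := b2 ℓ))
  have heq2 : (fun s : ℝ => deriv (fun t : ℝ =>
        ε * ∑ ℓ ∈ S, (φ |(c1 + s * b1 ℓ) + t * a1 ℓ| + φ |(c2 + s * b2 ℓ) + t * a2 ℓ|)) 0)
      =ᶠ[nhds 0] (fun s : ℝ =>
        ε * ∑ ℓ ∈ S, (deriv φ (c1 + s * b1 ℓ) * a1 ℓ + deriv φ (c2 + s * b2 ℓ) * a2 ℓ)) := by
    filter_upwards [hev] with s hs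
    exact (hasDeriv_sum hφ ε S (fun ℓ => c1 + s * b1 ℓ) (fun ℓ => c2 + s * b2 ℓ) a1 a2
      (fun ℓ hℓ => (hs ℓ hℓ).1) (fun ℓ hℓ => (hs ℓ hℓ).2)).deriv
  rw [heq2.deriv_eq]
  exact (HasDerivAt.const_mul ε (HasDerivAt.fun_sum fun ℓ _ =>
    ((hasDeriv_dphi hφ hc1 (b1 ℓ)).mul_const (a1 ℓ)).add
    ((hasDeriv_dphi hφ hc2 (b2 ℓ)).mul_const (a2 ℓ)))).deriv

lemma bd_fst {ε : ℝ} (w : ℤ → ℝ × ℝ) (ℓ : ℤ) :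
    (bd ε w ℓ).1 = ε⁻¹ * ((w ℓ).1 - (w (ℓ - 1)).1) := by
  simp [bd, smul_eq_mul]

lemma bd_snd {ε : ℝ} (w : ℤ → ℝ × ℝ) (ℓ : ℤ) :
    (bd ε w ℓ).2 = ε⁻¹ * ((w ℓ).2 - (w (ℓ - 1)).2) := by
  simp [bd, smul_eq_mul]

lemma bd_snd_zero {ε : ℝ} {w : ℤ → ℝ × ℝ} (hw : ∀ ℓ, (w ℓ).2 = 0) (ℓ : ℤ) :
    (bd ε w ℓ).2 = 0 := by
  rw [bd_snd]; simp [hw]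

lemma enorm2_of_snd_zero (p : ℝ × ℝ) (h : p.2 = 0) : enorm2 p = |p.1| := by
  rw [enorm2, h]
  simp [Real.sqrt_sq_eq_abs]

lemma bd_path_fst {ε : ℝ} (hε : ε ≠ 0) (F t s : ℝ) (u v : ℤ → ℝ × ℝ) (ℓ : ℤ) :
    (bd ε (fun m => yLin ε F m + t • u m + s • v m) ℓ).1
      = (F + s * (bd ε v ℓ).1) + t * (bd ε u ℓ).1 := by
  rw [bd_fst, bd_fst, bd_fst]
  simp only [yLin, Prod.fst_add, Prod.smul_fst, smul_eq_mul]
  push_cast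
  field_simp
  ring

lemma bd_path_snd {ε : ℝ} (F t s : ℝ) (u v : ℤ → ℝ × ℝ)
    (hu2 : ∀ ℓ, (u ℓ).2 = 0) (hv2 : ∀ ℓ, (v ℓ).2 = 0) (ℓ : ℤ) :
    (bd ε (fun m => yLin ε F m + t • u m + s • v m) ℓ).2 = 0 := by
  rw [bd_snd]
  simp [yLin, hu2, hv2]

lemma Ea_path (N : ℕ) {ε : ℝ} (hε : ε ≠ 0) (φ : ℝ → ℝ) (F t s : ℝ) (u v : ℤ → ℝ × ℝ)
    (hu2 : ∀ ℓ, (u ℓ).2 = 0) (hv2 : ∀ ℓ, (v ℓ).2 = 0) :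
    Ea N ε φ (fun m => yLin ε F m + t • u m + s • v m)
      = ε * ∑ ℓ ∈ Finset.Icc (1:ℤ) (N:ℤ),
          (φ |(F + s * (bd ε v ℓ).1) + t * (bd ε u ℓ).1|
            + φ |(2*F + s * ((bd ε v (ℓ+1)).1 + (bd ε v ℓ).1))
                  + t * ((bd ε u (ℓ+1)).1 + (bd ε u ℓ).1)|) := by
  unfold Ea
  congr 1
  apply Finset.sum_congr rfl
  intro ℓ _
  have hs0 := bd_path_snd (ε := ε) F t s u v hu2 hv2
  have hf := bd_path_fst hε F t s u v
  congr 1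
  · rw [enorm2_of_snd_zero _ (hs0 ℓ), hf ℓ]
  · rw [enorm2_of_snd_zero _ (by rw [Prod.snd_add, hs0, hs0, add_zero]), Prod.fst_add,
      hf, hf]
    rw [show ((F + s * (bd ε v (ℓ+1)).1) + t * (bd ε u (ℓ+1)).1)
          + ((F + s * (bd ε v ℓ).1) + t * (bd ε u ℓ).1)
        = (2*F + s * ((bd ε v (ℓ+1)).1 + (bd ε v ℓ).1))
          + t * ((bd ε u (ℓ+1)).1 + (bd ε u ℓ).1) from by ring]

lemma ECB_path (N : ℕ) {ε : ℝ} (hε : ε ≠ 0) (φ : ℝ → ℝ) (F t s : ℝ) (u v : ℤ → ℝ × ℝ)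
    (hu2 : ∀ ℓ, (u ℓ).2 = 0) (hv2 : ∀ ℓ, (v ℓ).2 = 0) :
    ECB N ε φ (fun m => yLin ε F m + t • u m + s • v m)
      = ε * ∑ ℓ ∈ Finset.Icc (1:ℤ) (N:ℤ),
          (φ |(F + s * (bd ε v ℓ).1) + t * (bd ε u ℓ).1|
            + φ |(2*F + s * (2 * (bd ε v ℓ).1)) + t * (2 * (bd ε u ℓ).1)|) := by
  unfold ECB
  congr 1
  apply Finset.sum_congr rfl
  intro ℓ _
  have hs0 := bd_path_snd (ε := ε) F t s u v hu2 hv2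
  have hf := bd_path_fst hε F t s u v
  congr 1
  · rw [enorm2_of_snd_zero _ (hs0 ℓ), hf ℓ]
  · rw [enorm2_of_snd_zero _ (hs0 ℓ), hf ℓ,
      show (2*F + s * (2 * (bd ε v ℓ).1)) + t * (2 * (bd ε u ℓ).1)
        = 2 * ((F + s * (bd ε v ℓ).1) + t * (bd ε u ℓ).1) from by ring,
      abs_mul, abs_two]

lemma shift_sum (N : ℕ) (hN : 1 ≤ N) (h : ℤ → ℝ) (hper : h ((N:ℤ)+1) = h 1) :
    ∑ ℓ ∈ Finset.Icc (1:ℤ) (N:ℤ), h (ℓ+1) = ∑ ℓ ∈ Finset.Icc (1:ℤ) (N:ℤ), h ℓ := by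
  have hN' : (1:ℤ) ≤ (N:ℤ) := by exact_mod_cast hN
  have hmap : ∑ ℓ ∈ Finset.Icc (2:ℤ) ((N:ℤ)+1), h ℓ
      = ∑ ℓ ∈ Finset.Icc (1:ℤ) (N:ℤ), h (ℓ+1) := by
    rw [show Finset.Icc (2:ℤ) ((N:ℤ)+1) = (Finset.Icc (1:ℤ) (N:ℤ)).map (addRightEmbedding 1)
      from by rw [Finset.map_add_right_Icc]; norm_num, Finset.sum_map]
    rfl
  rw [← hmap]
  have h2 : Finset.Icc (2:ℤ) ((N:ℤ)+1) = insert ((N:ℤ)+1) (Finset.Icc 2 (N:ℤ)) := by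
    ext x; simp only [Finset.mem_Icc, Finset.mem_insert]; omega
  have h3 : Finset.Icc (1:ℤ) (N:ℤ) = insert 1 (Finset.Icc 2 (N:ℤ)) := by
    ext x; simp only [Finset.mem_Icc, Finset.mem_insert]; omega
  rw [h2, h3, Finset.sum_insert (by simp [Finset.mem_Icc]),
    Finset.sum_insert (by simp [Finset.mem_Icc]), hper]

lemma telescope (N : ℕ) (hN : 1 ≤ N) (h : ℤ → ℝ) (hper : h ((N:ℤ)+1) = h 1) :
    ∑ ℓ ∈ Finset.Icc (1:ℤ) (N:ℤ), (h ℓ - h (ℓ+1)) = 0 := by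
  rw [Finset.sum_sub_distrib, shift_sum N hN h hper, sub_self]

lemma bd_per {ε : ℝ} {N : ℕ} (w : ℤ → ℝ × ℝ) (hw : ∀ ℓ, w (ℓ + (N:ℤ)) = w ℓ) :
    ∀ ℓ, bd ε w (ℓ + (N:ℤ)) = bd ε w ℓ := by
  intro ℓ
  unfold bd
  rw [show ℓ + (N:ℤ) - 1 = (ℓ - 1) + (N:ℤ) from by ring, hw, hw]

theorem stmt_8 (N : ℕ) (hN : 4 ≤ N) (ε : ℝ) (hε : ε = (N : ℝ)⁻¹)
    (φ : ℝ → ℝ) (hφ : ContDiffOn ℝ 2 φ (Set.Ioi 0)) (F : ℝ) (hF : 0 < F)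
    (f ua : ℤ → ℝ × ℝ) (hf : IsDisp1D N f) (hua : IsDisp1D N ua)
    (heq : ∀ v : ℤ → ℝ × ℝ, IsDisp1D N v →
      dE (Ea N ε φ) (yLin ε F) v + d2E (Ea N ε φ) (yLin ε F) ua v = ip N ε f v) :
    ∀ v : ℤ → ℝ × ℝ, IsDisp1D N v →
      |dE (ECB N ε φ) (yLin ε F) v + d2E (ECB N ε φ) (yLin ε F) ua v - ip N ε f v| ≤
        ε ^ 2 * |deriv (deriv φ) (2 * F)| *
          nrm N ε (bd ε (bd ε (bd ε ua))) * nrm N ε (bd ε v) := by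
  intro v hv
  obtain ⟨⟨huaP, -⟩, hua2⟩ := id hua
  obtain ⟨⟨hvP, -⟩, hv2⟩ := id hv
  have hN0 : (0:ℝ) < (N:ℝ) := by
    have : (0:ℕ) < N := by omega
    exact_mod_cast this
  have hε0 : 0 < ε := by rw [hε]; exact inv_pos.2 hN0
  have hεne : ε ≠ 0 := ne_of_gt hε0
  have hF2 : (0:ℝ) < 2 * F := by linarith
  have hN1 : 1 ≤ N := by omega
  -- periodicity of discrete derivatives
  have hAper : ∀ ℓ, (bd ε ua (ℓ + (N:ℤ))).1 = (bd ε ua ℓ).1 := fun ℓ => by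
    rw [bd_per ua huaP]
  have hCper : ∀ ℓ, (bd ε v (ℓ + (N:ℤ))).1 = (bd ε v ℓ).1 := fun ℓ => by
    rw [bd_per v hvP]
  have hTper : ∀ ℓ, (bd ε (bd ε (bd ε ua)) (ℓ + (N:ℤ))).1 = (bd ε (bd ε (bd ε ua)) ℓ).1 :=
    fun ℓ => by rw [bd_per _ (bd_per _ (bd_per ua huaP))]
  -- third difference identity
  have hT : ∀ ℓ : ℤ, ε^2 * (bd ε (bd ε (bd ε ua)) (ℓ+1)).1
      = (bd ε ua (ℓ+1)).1 - 2 * (bd ε ua ℓ).1 + (bd ε ua (ℓ-1)).1 := by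
    intro ℓ
    simp only [bd_fst]
    simp only [add_sub_cancel_right]
    field_simp
    ring
  -- the four variation formulas
  have h1 : dE (Ea N ε φ) (yLin ε F) v
      = ε * ∑ ℓ ∈ Finset.Icc (1:ℤ) (N:ℤ), (deriv φ F * (bd ε v ℓ).1
          + deriv φ (2*F) * ((bd ε v (ℓ+1)).1 + (bd ε v ℓ).1)) := by
    unfold dE
    have hfun : (fun t : ℝ => Ea N ε φ (fun m => yLin ε F m + t • v m))
        = fun t : ℝ => ε * ∑ ℓ ∈ Finset.Icc (1:ℤ) (N:ℤ),
            (φ |F + t * (bd ε v ℓ).1|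
              + φ |2*F + t * ((bd ε v (ℓ+1)).1 + (bd ε v ℓ).1)|) := by
      funext t
      rw [show (fun m => yLin ε F m + t • v m)
          = (fun m => yLin ε F m + t • v m + (0:ℝ) • v m) from by funext m; simp,
        Ea_path N hεne φ F t 0 v v hv2 hv2]
      simp only [zero_mul, add_zero]
    rw [hfun]
    exact (hasDeriv_sum hφ ε _ (fun _ => F) (fun _ => 2*F) (fun ℓ => (bd ε v ℓ).1)
      (fun ℓ => (bd ε v (ℓ+1)).1 + (bd ε v ℓ).1) (fun _ _ => hF) (fun _ _ => hF2)).deriv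
  have h3 : dE (ECB N ε φ) (yLin ε F) v
      = ε * ∑ ℓ ∈ Finset.Icc (1:ℤ) (N:ℤ), (deriv φ F * (bd ε v ℓ).1
          + deriv φ (2*F) * (2 * (bd ε v ℓ).1)) := by
    unfold dE
    have hfun : (fun t : ℝ => ECB N ε φ (fun m => yLin ε F m + t • v m))
        = fun t : ℝ => ε * ∑ ℓ ∈ Finset.Icc (1:ℤ) (N:ℤ),
            (φ |F + t * (bd ε v ℓ).1| + φ |2*F + t * (2 * (bd ε v ℓ).1)|) := by
      funext t
      rw [show (fun m => yLin ε F m + t • v m)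
          = (fun m => yLin ε F m + t • v m + (0:ℝ) • v m) from by funext m; simp,
        ECB_path N hεne φ F t 0 v v hv2 hv2]
      simp only [zero_mul, add_zero]
    rw [hfun]
    exact (hasDeriv_sum hφ ε _ (fun _ => F) (fun _ => 2*F) (fun ℓ => (bd ε v ℓ).1)
      (fun ℓ => 2 * (bd ε v ℓ).1) (fun _ _ => hF) (fun _ _ => hF2)).deriv
  have h2 : d2E (Ea N ε φ) (yLin ε F) ua v
      = ε * ∑ ℓ ∈ Finset.Icc (1:ℤ) (N:ℤ),
          (deriv (deriv φ) F * (bd ε v ℓ).1 * (bd ε ua ℓ).1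
            + deriv (deriv φ) (2*F) * ((bd ε v (ℓ+1)).1 + (bd ε v ℓ).1)
                * ((bd ε ua (ℓ+1)).1 + (bd ε ua ℓ).1)) := by
    unfold d2E
    have hfun : (fun s : ℝ => deriv (fun t : ℝ =>
          Ea N ε φ (fun m => yLin ε F m + t • ua m + s • v m)) 0)
        = fun s : ℝ => deriv (fun t : ℝ => ε * ∑ ℓ ∈ Finset.Icc (1:ℤ) (N:ℤ),
            (φ |(F + s * (bd ε v ℓ).1) + t * (bd ε ua ℓ).1|
              + φ |(2*F + s * ((bd ε v (ℓ+1)).1 + (bd ε v ℓ).1))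
                    + t * ((bd ε ua (ℓ+1)).1 + (bd ε ua ℓ).1)|)) 0 := by
      funext s
      congr 1
      funext t
      exact Ea_path N hεne φ F t s ua v hua2 hv2
    rw [hfun]
    exact deriv2_sum hφ _ hF hF2 (fun ℓ => (bd ε ua ℓ).1)
      (fun ℓ => (bd ε ua (ℓ+1)).1 + (bd ε ua ℓ).1) (fun ℓ => (bd ε v ℓ).1)
      (fun ℓ => (bd ε v (ℓ+1)).1 + (bd ε v ℓ).1)
  have h4 : d2E (ECB N ε φ) (yLin ε F) ua v
      = ε * ∑ ℓ ∈ Finset.Icc (1:ℤ) (N:ℤ),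
          (deriv (deriv φ) F * (bd ε v ℓ).1 * (bd ε ua ℓ).1
            + deriv (deriv φ) (2*F) * (2 * (bd ε v ℓ).1) * (2 * (bd ε ua ℓ).1)) := by
    unfold d2E
    have hfun : (fun s : ℝ => deriv (fun t : ℝ =>
          ECB N ε φ (fun m => yLin ε F m + t • ua m + s • v m)) 0)
        = fun s : ℝ => deriv (fun t : ℝ => ε * ∑ ℓ ∈ Finset.Icc (1:ℤ) (N:ℤ),
            (φ |(F + s * (bd ε v ℓ).1) + t * (bd ε ua ℓ).1|
              + φ |(2*F + s * (2 * (bd ε v ℓ).1)) + t * (2 * (bd ε ua ℓ).1)|)) 0 := by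
      funext s
      congr 1
      funext t
      exact ECB_path N hεne φ F t s ua v hua2 hv2
    rw [hfun]
    exact deriv2_sum hφ _ hF hF2 (fun ℓ => (bd ε ua ℓ).1)
      (fun ℓ => 2 * (bd ε ua ℓ).1) (fun ℓ => (bd ε v ℓ).1)
      (fun ℓ => 2 * (bd ε v ℓ).1)
  rw [← heq v hv, h1, h2, h3, h4]
  -- combine the four sums
  have hstep : (ε * ∑ ℓ ∈ Finset.Icc (1:ℤ) (N:ℤ), (deriv φ F * (bd ε v ℓ).1
          + deriv φ (2*F) * (2 * (bd ε v ℓ).1)))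
      + (ε * ∑ ℓ ∈ Finset.Icc (1:ℤ) (N:ℤ),
          (deriv (deriv φ) F * (bd ε v ℓ).1 * (bd ε ua ℓ).1
            + deriv (deriv φ) (2*F) * (2 * (bd ε v ℓ).1) * (2 * (bd ε ua ℓ).1)))
      - ((ε * ∑ ℓ ∈ Finset.Icc (1:ℤ) (N:ℤ), (deriv φ F * (bd ε v ℓ).1
          + deriv φ (2*F) * ((bd ε v (ℓ+1)).1 + (bd ε v ℓ).1)))
        + (ε * ∑ ℓ ∈ Finset.Icc (1:ℤ) (N:ℤ),
          (deriv (deriv φ) F * (bd ε v ℓ).1 * (bd ε ua ℓ).1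
            + deriv (deriv φ) (2*F) * ((bd ε v (ℓ+1)).1 + (bd ε v ℓ).1)
                * ((bd ε ua (ℓ+1)).1 + (bd ε ua ℓ).1))))
      = ε * ∑ ℓ ∈ Finset.Icc (1:ℤ) (N:ℤ),
          ((deriv φ F * (bd ε v ℓ).1 + deriv φ (2*F) * (2 * (bd ε v ℓ).1))
            + (deriv (deriv φ) F * (bd ε v ℓ).1 * (bd ε ua ℓ).1
              + deriv (deriv φ) (2*F) * (2 * (bd ε v ℓ).1) * (2 * (bd ε ua ℓ).1))
            - ((deriv φ F * (bd ε v ℓ).1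
                + deriv φ (2*F) * ((bd ε v (ℓ+1)).1 + (bd ε v ℓ).1))
              + (deriv (deriv φ) F * (bd ε v ℓ).1 * (bd ε ua ℓ).1
                + deriv (deriv φ) (2*F) * ((bd ε v (ℓ+1)).1 + (bd ε v ℓ).1)
                    * ((bd ε ua (ℓ+1)).1 + (bd ε ua ℓ).1)))) := by
    have e : ∀ a b c d : ℝ, ε * a + ε * b - (ε * c + ε * d) = ε * (a + b - (c + d)) := by
      intros; ring
    rw [e, ← Finset.sum_add_distrib, ← Finset.sum_add_distrib, ← Finset.sum_sub_distrib]
  rw [hstep]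
  -- the key summation identity
  have key : ∑ ℓ ∈ Finset.Icc (1:ℤ) (N:ℤ),
        ((deriv φ F * (bd ε v ℓ).1 + deriv φ (2*F) * (2 * (bd ε v ℓ).1))
          + (deriv (deriv φ) F * (bd ε v ℓ).1 * (bd ε ua ℓ).1
            + deriv (deriv φ) (2*F) * (2 * (bd ε v ℓ).1) * (2 * (bd ε ua ℓ).1))
          - ((deriv φ F * (bd ε v ℓ).1
              + deriv φ (2*F) * ((bd ε v (ℓ+1)).1 + (bd ε v ℓ).1))
            + (deriv (deriv φ) F * (bd ε v ℓ).1 * (bd ε ua ℓ).1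
              + deriv (deriv φ) (2*F) * ((bd ε v (ℓ+1)).1 + (bd ε v ℓ).1)
                  * ((bd ε ua (ℓ+1)).1 + (bd ε ua ℓ).1))))
      = -(ε^2 * deriv (deriv φ) (2*F) * ∑ ℓ ∈ Finset.Icc (1:ℤ) (N:ℤ),
          (bd ε (bd ε (bd ε ua)) (ℓ+1)).1 * (bd ε v ℓ).1) := by
    rw [← sub_eq_zero, sub_neg_eq_add, Finset.mul_sum, ← Finset.sum_add_distrib]
    have hpoint : ∀ ℓ ∈ Finset.Icc (1:ℤ) (N:ℤ),
        ((deriv φ F * (bd ε v ℓ).1 + deriv φ (2*F) * (2 * (bd ε v ℓ).1))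
          + (deriv (deriv φ) F * (bd ε v ℓ).1 * (bd ε ua ℓ).1
            + deriv (deriv φ) (2*F) * (2 * (bd ε v ℓ).1) * (2 * (bd ε ua ℓ).1))
          - ((deriv φ F * (bd ε v ℓ).1
              + deriv φ (2*F) * ((bd ε v (ℓ+1)).1 + (bd ε v ℓ).1))
            + (deriv (deriv φ) F * (bd ε v ℓ).1 * (bd ε ua ℓ).1
              + deriv (deriv φ) (2*F) * ((bd ε v (ℓ+1)).1 + (bd ε v ℓ).1)
                  * ((bd ε ua (ℓ+1)).1 + (bd ε ua ℓ).1))))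
          + ε^2 * deriv (deriv φ) (2*F)
              * ((bd ε (bd ε (bd ε ua)) (ℓ+1)).1 * (bd ε v ℓ).1)
        = (deriv φ (2*F) * (bd ε v ℓ).1 - deriv φ (2*F) * (bd ε v (ℓ+1)).1)
          + ((deriv (deriv φ) (2*F) * ((bd ε v ℓ).1 * (bd ε ua ℓ).1)
              - deriv (deriv φ) (2*F) * ((bd ε v (ℓ+1)).1 * (bd ε ua (ℓ+1)).1))
            + (deriv (deriv φ) (2*F) * ((bd ε v ℓ).1 * (bd ε ua (ℓ-1)).1)
              - deriv (deriv φ) (2*F) * ((bd ε v (ℓ+1)).1 * (bd ε ua (ℓ+1-1)).1))) := by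
      intro ℓ _
      have e : (ℓ:ℤ) + 1 - 1 = ℓ := by ring
      rw [e]
      linear_combination (deriv (deriv φ) (2*F) * (bd ε v ℓ).1) * hT ℓ
    rw [Finset.sum_congr rfl hpoint, Finset.sum_add_distrib, Finset.sum_add_distrib]
    have tele1 : ∑ ℓ ∈ Finset.Icc (1:ℤ) (N:ℤ),
        (deriv φ (2*F) * (bd ε v ℓ).1 - deriv φ (2*F) * (bd ε v (ℓ+1)).1) = 0 :=
      telescope N hN1 (fun m => deriv φ (2*F) * (bd ε v m).1)
        (by show deriv φ (2*F) * (bd ε v ((N:ℤ)+1)).1 = deriv φ (2*F) * (bd ε v 1).1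
            rw [show (N:ℤ) + 1 = 1 + (N:ℤ) from by ring, hCper 1])
    have tele2 : ∑ ℓ ∈ Finset.Icc (1:ℤ) (N:ℤ),
        (deriv (deriv φ) (2*F) * ((bd ε v ℓ).1 * (bd ε ua ℓ).1)
          - deriv (deriv φ) (2*F) * ((bd ε v (ℓ+1)).1 * (bd ε ua (ℓ+1)).1)) = 0 :=
      telescope N hN1 (fun m => deriv (deriv φ) (2*F) * ((bd ε v m).1 * (bd ε ua m).1))
        (by show deriv (deriv φ) (2*F) * ((bd ε v ((N:ℤ)+1)).1 * (bd ε ua ((N:ℤ)+1)).1)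
              = deriv (deriv φ) (2*F) * ((bd ε v 1).1 * (bd ε ua 1).1)
            rw [show (N:ℤ) + 1 = 1 + (N:ℤ) from by ring, hCper 1, hAper 1])
    have tele3 : ∑ ℓ ∈ Finset.Icc (1:ℤ) (N:ℤ),
        (deriv (deriv φ) (2*F) * ((bd ε v ℓ).1 * (bd ε ua (ℓ-1)).1)
          - deriv (deriv φ) (2*F) * ((bd ε v (ℓ+1)).1 * (bd ε ua (ℓ+1-1)).1)) = 0 :=
      telescope N hN1 (fun m => deriv (deriv φ) (2*F) * ((bd ε v m).1 * (bd ε ua (m-1)).1))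
        (by show deriv (deriv φ) (2*F) * ((bd ε v ((N:ℤ)+1)).1 * (bd ε ua ((N:ℤ)+1-1)).1)
              = deriv (deriv φ) (2*F) * ((bd ε v 1).1 * (bd ε ua (1-1)).1)
            rw [show (N:ℤ) + 1 = 1 + (N:ℤ) from by ring, hCper 1,
              show (1:ℤ) + (N:ℤ) - 1 = 0 + (N:ℤ) from by ring, hAper 0,
              show (1:ℤ) - 1 = 0 from by norm_num])
    rw [tele1, tele2, tele3]
    norm_num
  rw [key]
  -- norms
  have hST : (0:ℝ) ≤ ∑ ℓ ∈ Finset.Icc (1:ℤ) (N:ℤ), ((bd ε (bd ε (bd ε ua)) ℓ).1)^2 :=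
    Finset.sum_nonneg fun _ _ => sq_nonneg _
  have hSC : (0:ℝ) ≤ ∑ ℓ ∈ Finset.Icc (1:ℤ) (N:ℤ), ((bd ε v ℓ).1)^2 :=
    Finset.sum_nonneg fun _ _ => sq_nonneg _
  have hnrm1 : nrm N ε (bd ε (bd ε (bd ε ua)))
      = Real.sqrt (ε * ∑ ℓ ∈ Finset.Icc (1:ℤ) (N:ℤ), ((bd ε (bd ε (bd ε ua)) ℓ).1)^2) := by
    unfold nrm
    congr 2
    apply Finset.sum_congr rfl
    intro ℓ _
    rw [enorm2_of_snd_zero _ (bd_snd_zero (bd_snd_zero (bd_snd_zero hua2)) ℓ), sq_abs]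
  have hnrm2 : nrm N ε (bd ε v)
      = Real.sqrt (ε * ∑ ℓ ∈ Finset.Icc (1:ℤ) (N:ℤ), ((bd ε v ℓ).1)^2) := by
    unfold nrm
    congr 2
    apply Finset.sum_congr rfl
    intro ℓ _
    rw [enorm2_of_snd_zero _ (bd_snd_zero hv2 ℓ), sq_abs]
  rw [hnrm1, hnrm2]
  -- Cauchy-Schwarz
  have hcs : (∑ ℓ ∈ Finset.Icc (1:ℤ) (N:ℤ),
        (bd ε (bd ε (bd ε ua)) (ℓ+1)).1 * (bd ε v ℓ).1)^2
      ≤ (∑ ℓ ∈ Finset.Icc (1:ℤ) (N:ℤ), ((bd ε (bd ε (bd ε ua)) (ℓ+1)).1)^2)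
        * ∑ ℓ ∈ Finset.Icc (1:ℤ) (N:ℤ), ((bd ε v ℓ).1)^2 :=
    Finset.sum_mul_sq_le_sq_mul_sq _ _ _
  have hsh : ∑ ℓ ∈ Finset.Icc (1:ℤ) (N:ℤ), ((bd ε (bd ε (bd ε ua)) (ℓ+1)).1)^2
      = ∑ ℓ ∈ Finset.Icc (1:ℤ) (N:ℤ), ((bd ε (bd ε (bd ε ua)) ℓ).1)^2 :=
    shift_sum N hN1 (fun m => ((bd ε (bd ε (bd ε ua)) m).1)^2)
      (by show ((bd ε (bd ε (bd ε ua)) ((N:ℤ)+1)).1)^2 = ((bd ε (bd ε (bd ε ua)) 1).1)^2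
          rw [show (N:ℤ) + 1 = 1 + (N:ℤ) from by ring, hTper 1])
  rw [hsh] at hcs
  have hQ : ε * |∑ ℓ ∈ Finset.Icc (1:ℤ) (N:ℤ),
        (bd ε (bd ε (bd ε ua)) (ℓ+1)).1 * (bd ε v ℓ).1|
      ≤ Real.sqrt (ε * ∑ ℓ ∈ Finset.Icc (1:ℤ) (N:ℤ), ((bd ε (bd ε (bd ε ua)) ℓ).1)^2)
        * Real.sqrt (ε * ∑ ℓ ∈ Finset.Icc (1:ℤ) (N:ℤ), ((bd ε v ℓ).1)^2) := by
    set Q := ∑ ℓ ∈ Finset.Icc (1:ℤ) (N:ℤ),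
        (bd ε (bd ε (bd ε ua)) (ℓ+1)).1 * (bd ε v ℓ).1 with hQdef
    set ST := ∑ ℓ ∈ Finset.Icc (1:ℤ) (N:ℤ), ((bd ε (bd ε (bd ε ua)) ℓ).1)^2 with hSTdef
    set SC := ∑ ℓ ∈ Finset.Icc (1:ℤ) (N:ℤ), ((bd ε v ℓ).1)^2 with hSCdef
    calc ε * |Q| = Real.sqrt ((ε * |Q|)^2) :=
          (Real.sqrt_sq (mul_nonneg hε0.le (abs_nonneg _))).symm
      _ ≤ Real.sqrt ((ε * ST) * (ε * SC)) := by
          apply Real.sqrt_le_sqrt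
          calc (ε * |Q|)^2 = ε^2 * Q^2 := by rw [mul_pow, sq_abs]
            _ ≤ ε^2 * (ST * SC) := mul_le_mul_of_nonneg_left hcs (sq_nonneg ε)
            _ = (ε * ST) * (ε * SC) := by ring
      _ = Real.sqrt (ε * ST) * Real.sqrt (ε * SC) :=
          Real.sqrt_mul (mul_nonneg hε0.le hST) _
  -- final estimate
  calc |ε * -(ε^2 * deriv (deriv φ) (2*F) * ∑ ℓ ∈ Finset.Icc (1:ℤ) (N:ℤ),
          (bd ε (bd ε (bd ε ua)) (ℓ+1)).1 * (bd ε v ℓ).1)|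
      = ε^2 * |deriv (deriv φ) (2*F)| * (ε * |∑ ℓ ∈ Finset.Icc (1:ℤ) (N:ℤ),
          (bd ε (bd ε (bd ε ua)) (ℓ+1)).1 * (bd ε v ℓ).1|) := by
        rw [show ε * -(ε^2 * deriv (deriv φ) (2*F) * ∑ ℓ ∈ Finset.Icc (1:ℤ) (N:ℤ),
              (bd ε (bd ε (bd ε ua)) (ℓ+1)).1 * (bd ε v ℓ).1)
            = -(ε^2 * deriv (deriv φ) (2*F) * (ε * ∑ ℓ ∈ Finset.Icc (1:ℤ) (N:ℤ),
              (bd ε (bd ε (bd ε ua)) (ℓ+1)).1 * (bd ε v ℓ).1)) from by ring,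
          abs_neg, abs_mul, abs_mul, abs_mul, abs_of_pos hε0, abs_of_pos (pow_pos hε0 2)]
    _ ≤ ε^2 * |deriv (deriv φ) (2*F)|
        * (Real.sqrt (ε * ∑ ℓ ∈ Finset.Icc (1:ℤ) (N:ℤ), ((bd ε (bd ε (bd ε ua)) ℓ).1)^2)
          * Real.sqrt (ε * ∑ ℓ ∈ Finset.Icc (1:ℤ) (N:ℤ), ((bd ε v ℓ).1)^2)) :=
        mul_le_mul_of_nonneg_left hQ (by positivity)
    _ = ε^2 * |deriv (deriv φ) (2*F)|
        * Real.sqrt (ε * ∑ ℓ ∈ Finset.Icc (1:ℤ) (N:ℤ), ((bd ε (bd ε (bd ε ua)) ℓ).1)^2)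
        * Real.sqrt (ε * ∑ ℓ ∈ Finset.Icc (1:ℤ) (N:ℤ), ((bd ε v ℓ).1)^2) := by ring
end
end

section
/- Let y_F be the linear chain with nearest-neighbor spacing Fε, and suppose γ₁ := φ''(F) + 4 φ''(2F) > 0. Given f ∈ 𝒰̃, let u^a, u^CB ∈ 𝒰̃ satisfy δE^a(y_F)[v] + δ²E^a(y_F)[u^a, v] = ⟨f, v⟩ and δE^CB(y_F)[v] + δ²E^CB(y_F)[u^CB, v] = ⟨f, v⟩, respectively, for all v ∈ 𝒰̃. Then ‖(u^a − u^CB)'‖_{ℓ²_ε} ≤ (ε² |φ''(2F)| / γ₁) ‖(u^a)'''‖_{ℓ²_ε}. -/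
noncomputable section

open Real Finset

namespace Stmt11Aux

open Real Finset

/-- scalar (first) component of a displacement -/
def sc (u : ℤ → ℝ × ℝ) (ℓ : ℤ) : ℝ := (u ℓ).1

/-- scalar backward difference -/
def Df (ε : ℝ) (g : ℤ → ℝ) (ℓ : ℤ) : ℝ := ε⁻¹ * (g ℓ - g (ℓ - 1))

lemma enorm2_pair (x : ℝ) : enorm2 (x, 0) = |x| := by
  simp [enorm2, Real.sqrt_sq_eq_abs]

lemma bd_eq {ε : ℝ} {u : ℤ → ℝ × ℝ} (hu2 : ∀ ℓ, (u ℓ).2 = 0) (ℓ : ℤ) :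
    bd ε u ℓ = (Df ε (sc u) ℓ, 0) := by
  unfold bd Df sc
  ext
  · simp [mul_sub]
  · simp [hu2]

lemma Df_periodic {ε : ℝ} {N : ℕ} {g : ℤ → ℝ} (hg : ∀ ℓ, g (ℓ + (N : ℤ)) = g ℓ) :
    ∀ ℓ, Df ε g (ℓ + (N : ℤ)) = Df ε g ℓ := by
  intro ℓ
  unfold Df
  rw [hg, show ℓ + (N : ℤ) - 1 = (ℓ - 1) + N by ring, hg]

lemma sum_shift {N : ℕ} (hN : 1 ≤ N) (g : ℤ → ℝ) (hg : ∀ ℓ, g (ℓ + (N : ℤ)) = g ℓ) :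
    ∑ ℓ ∈ Icc (1 : ℤ) (N : ℤ), g (ℓ + 1) = ∑ ℓ ∈ Icc (1 : ℤ) (N : ℤ), g ℓ := by
  have hN' : (1 : ℤ) ≤ (N : ℤ) := by exact_mod_cast hN
  have h1 : ∑ ℓ ∈ Icc (1 : ℤ) (N : ℤ), g (ℓ + 1) = ∑ ℓ ∈ Icc (2 : ℤ) ((N : ℤ) + 1), g ℓ := by
    apply Finset.sum_nbij' (fun i => i + 1) (fun j => j - 1) <;>
      simp (config := { contextual := true }) [Finset.mem_Icc] <;> omega
  rw [h1]
  have e2 : Icc (2 : ℤ) ((N : ℤ) + 1) = insert ((N : ℤ) + 1) (Icc 2 (N : ℤ)) := by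
    ext x; simp only [Finset.mem_Icc, Finset.mem_insert]; omega
  have e3 : Icc (1 : ℤ) (N : ℤ) = insert 1 (Icc 2 (N : ℤ)) := by
    ext x; simp only [Finset.mem_Icc, Finset.mem_insert]; omega
  rw [e2, e3, Finset.sum_insert (by simp [Finset.mem_Icc]), 
    Finset.sum_insert (by simp [Finset.mem_Icc])]
  rw [show (N : ℤ) + 1 = 1 + (N : ℤ) by ring, hg 1]

lemma sum_shift_down {N : ℕ} (hN : 1 ≤ N) (g : ℤ → ℝ) (hg : ∀ ℓ, g (ℓ + (N : ℤ)) = g ℓ) :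
    ∑ ℓ ∈ Icc (1 : ℤ) (N : ℤ), g (ℓ - 1) = ∑ ℓ ∈ Icc (1 : ℤ) (N : ℤ), g ℓ := by
  have h := sum_shift hN (fun ℓ => g (ℓ - 1)) (fun ℓ => by
    show g (ℓ + (N : ℤ) - 1) = g (ℓ - 1)
    rw [show ℓ + (N : ℤ) - 1 = (ℓ - 1) + N by ring, hg])
  simpa using h.symm

lemma sum_Df_zero {ε : ℝ} {N : ℕ} (hN : 1 ≤ N) (g : ℤ → ℝ)
    (hg : ∀ ℓ, g (ℓ + (N : ℤ)) = g ℓ) :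
    ∑ ℓ ∈ Icc (1 : ℤ) (N : ℤ), Df ε g ℓ = 0 := by
  unfold Df
  rw [← Finset.mul_sum, Finset.sum_sub_distrib, sum_shift_down hN g hg, sub_self, mul_zero]

end Stmt11Aux
namespace Stmt11Aux

open Real Finset

variable {φ : ℝ → ℝ}

lemma hder1 (hφ : ContDiffOn ℝ 2 φ (Set.Ioi 0)) {x : ℝ} (hx : 0 < x) :
    HasDerivAt φ (deriv φ x) x := by
  have hd : DifferentiableOn ℝ φ (Set.Ioi 0) := hφ.differentiableOn (by norm_num)
  exact (hd.differentiableAt (isOpen_Ioi.mem_nhds hx)).hasDerivAt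

lemma hder2 (hφ : ContDiffOn ℝ 2 φ (Set.Ioi 0)) {x : ℝ} (hx : 0 < x) :
    HasDerivAt (deriv φ) (deriv (deriv φ) x) x := by
  have h2 : ContDiffOn ℝ (1 + 1) φ (Set.Ioi 0) := by
    convert hφ using 2
    norm_num
  have hd : ContDiffOn ℝ 1 (deriv φ) (Set.Ioi 0) :=
    ((contDiffOn_succ_iff_deriv_of_isOpen isOpen_Ioi).1 h2).2.2
  have hdd : DifferentiableOn ℝ (deriv φ) (Set.Ioi 0) := hd.differentiableOn (by norm_num)
  exact (hdd.differentiableAt (isOpen_Ioi.mem_nhds hx)).hasDerivAt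

lemma term_t (hφ : ContDiffOn ℝ 2 φ (Set.Ioi 0)) {x : ℝ} (hx : 0 < x) (a : ℝ) :
    HasDerivAt (fun t : ℝ => φ (|x + t * a|)) (deriv φ x * a) 0 := by
  have hlin : HasDerivAt (fun t : ℝ => x + t * a) a 0 := by
    simpa using ((hasDerivAt_id (0 : ℝ)).mul_const a).const_add x
  have h1 : HasDerivAt (fun t : ℝ => φ (x + t * a)) (deriv φ x * a) 0 := by
    have h := HasDerivAt.comp (h := fun t : ℝ => x + t * a) 0
      (by simp only [zero_mul, add_zero]; exact hder1 hφ hx) hlin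
    exact h
  apply h1.congr_of_eventuallyEq
  have hc : ContinuousAt (fun t : ℝ => x + t * a) 0 := by fun_prop
  have hpos : ∀ᶠ t in nhds (0 : ℝ), 0 < x + t * a := by
    have := hc.eventually_mem (isOpen_Ioi.mem_nhds (by simpa using hx))
    simpa [Set.mem_Ioi] using this
  filter_upwards [hpos] with t ht
  rw [abs_of_pos ht]

lemma term_s (hφ : ContDiffOn ℝ 2 φ (Set.Ioi 0)) {x : ℝ} (hx : 0 < x) (b a : ℝ) :
    HasDerivAt (fun s : ℝ => deriv φ (x + s * b) * a) (deriv (deriv φ) x * b * a) 0 := by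
  have hlin : HasDerivAt (fun s : ℝ => x + s * b) b 0 := by
    simpa using ((hasDerivAt_id (0 : ℝ)).mul_const b).const_add x
  have h := (HasDerivAt.comp (h := fun s : ℝ => x + s * b) 0
    (by simp only [zero_mul, add_zero]; exact hder2 hφ hx) hlin).mul_const a
  simpa using h

lemma sum_t (hφ : ContDiffOn ℝ 2 φ (Set.Ioi 0)) (S : Finset ℤ) (r a : ℤ → ℝ)
    (hr : ∀ i ∈ S, 0 < r i) :
    HasDerivAt (fun t : ℝ => ∑ i ∈ S, φ (|r i + t * a i|))
      (∑ i ∈ S, deriv φ (r i) * a i) 0 :=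
  HasDerivAt.fun_sum (fun i hi => term_t hφ (hr i hi) (a i))

lemma sum_t' (hφ : ContDiffOn ℝ 2 φ (Set.Ioi 0)) (S : Finset ℤ) (r a c : ℤ → ℝ)
    (hr : ∀ i ∈ S, 0 < r i + c i) :
    HasDerivAt (fun t : ℝ => ∑ i ∈ S, φ (|r i + t * a i + c i|))
      (∑ i ∈ S, deriv φ (r i + c i) * a i) 0 := by
  have hfun : (fun t : ℝ => ∑ i ∈ S, φ (|r i + t * a i + c i|)) =
      fun t : ℝ => ∑ i ∈ S, φ (|(r i + c i) + t * a i|) := by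
    funext t
    refine Finset.sum_congr rfl fun i _ => ?_
    congr 2
    ring
  rw [hfun]
  exact sum_t hφ S (fun i => r i + c i) a hr

lemma sum_s (hφ : ContDiffOn ℝ 2 φ (Set.Ioi 0)) (S : Finset ℤ) (r b a : ℤ → ℝ)
    (hr : ∀ i ∈ S, 0 < r i) :
    HasDerivAt (fun s : ℝ => ∑ i ∈ S, deriv φ (r i + s * b i) * a i)
      (∑ i ∈ S, deriv (deriv φ) (r i) * b i * a i) 0 :=
  HasDerivAt.fun_sum (fun i hi => term_s hφ (hr i hi) (b i) (a i))

lemma d1_formula (hφ : ContDiffOn ℝ 2 φ (Set.Ioi 0)) (ε : ℝ) (S : Finset ℤ)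
    (r1 r2 a1 a2 : ℤ → ℝ) (h1 : ∀ i ∈ S, 0 < r1 i) (h2 : ∀ i ∈ S, 0 < r2 i) :
    deriv (fun t : ℝ => ε * ((∑ i ∈ S, φ (|r1 i + t * a1 i|)) +
        ∑ i ∈ S, φ (|r2 i + t * a2 i|))) 0
      = ε * ((∑ i ∈ S, deriv φ (r1 i) * a1 i) + ∑ i ∈ S, deriv φ (r2 i) * a2 i) :=
  (((sum_t hφ S r1 a1 h1).add (sum_t hφ S r2 a2 h2)).const_mul ε).deriv

lemma d2_formula (hφ : ContDiffOn ℝ 2 φ (Set.Ioi 0)) (ε : ℝ) (S : Finset ℤ)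
    (r1 r2 a1 a2 b1 b2 : ℤ → ℝ) (h1 : ∀ i ∈ S, 0 < r1 i) (h2 : ∀ i ∈ S, 0 < r2 i) :
    deriv (fun s : ℝ => deriv (fun t : ℝ => ε * ((∑ i ∈ S, φ (|r1 i + t * a1 i + s * b1 i|)) +
        ∑ i ∈ S, φ (|r2 i + t * a2 i + s * b2 i|))) 0) 0
      = ε * ((∑ i ∈ S, deriv (deriv φ) (r1 i) * b1 i * a1 i) +
          ∑ i ∈ S, deriv (deriv φ) (r2 i) * b2 i * a2 i) := by
  have A : ∀ (r b : ℤ → ℝ), (∀ i ∈ S, 0 < r i) →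
      ∀ᶠ s : ℝ in nhds 0, ∀ i ∈ S, 0 < r i + s * b i := by
    intro r b hr
    rw [Filter.eventually_all_finset]
    intro i hi
    have hc : ContinuousAt (fun s : ℝ => r i + s * b i) 0 := by fun_prop
    have := hc.eventually_mem (isOpen_Ioi.mem_nhds (by simpa using hr i hi))
    simpa [Set.mem_Ioi] using this
  have key : (fun s : ℝ => deriv (fun t : ℝ =>
        ε * ((∑ i ∈ S, φ (|r1 i + t * a1 i + s * b1 i|)) +
          ∑ i ∈ S, φ (|r2 i + t * a2 i + s * b2 i|))) 0) =ᶠ[nhds 0]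
      (fun s : ℝ => ε * ((∑ i ∈ S, deriv φ (r1 i + s * b1 i) * a1 i) +
        ∑ i ∈ S, deriv φ (r2 i + s * b2 i) * a2 i)) := by
    filter_upwards [(A r1 b1 h1).and (A r2 b2 h2)] with s hs
    exact (((sum_t' hφ S r1 a1 (fun i => s * b1 i) hs.1).add
      (sum_t' hφ S r2 a2 (fun i => s * b2 i) hs.2)).const_mul ε).deriv
  rw [key.deriv_eq]
  exact (((sum_s hφ S r1 b1 a1 h1).add (sum_s hφ S r2 b2 a2 h2)).const_mul ε).deriv

end Stmt11Aux
namespace Stmt11Aux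

open Real Finset

variable {φ : ℝ → ℝ} {ε F : ℝ} {N : ℕ} {u v : ℤ → ℝ × ℝ}

lemma bd_shift (hε : ε ≠ 0) (hu2 : ∀ ℓ, (u ℓ).2 = 0) (hv2 : ∀ ℓ, (v ℓ).2 = 0)
    (s t : ℝ) (ℓ : ℤ) :
    bd ε (fun m => yLin ε F m + t • u m + s • v m) ℓ =
      (F + t * Df ε (sc u) ℓ + s * Df ε (sc v) ℓ, 0) := by
  unfold bd yLin Df sc
  ext
  · push_cast
    simp only [Prod.fst_add, Prod.smul_fst, Prod.fst_sub, smul_eq_mul]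
    field_simp
    ring
  · simp [hu2, hv2]

lemma Ea_eval (hε : ε ≠ 0) (hu2 : ∀ ℓ, (u ℓ).2 = 0) (hv2 : ∀ ℓ, (v ℓ).2 = 0)
    (s t : ℝ) :
    Ea N ε φ (fun ℓ => yLin ε F ℓ + t • u ℓ + s • v ℓ) =
      ε * ((∑ ℓ ∈ Icc (1 : ℤ) (N : ℤ),
          φ (|F + t * Df ε (sc u) ℓ + s * Df ε (sc v) ℓ|)) +
        ∑ ℓ ∈ Icc (1 : ℤ) (N : ℤ),
          φ (|2 * F + t * (Df ε (sc u) (ℓ + 1) + Df ε (sc u) ℓ) +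
            s * (Df ε (sc v) (ℓ + 1) + Df ε (sc v) ℓ)|)) := by
  unfold Ea
  rw [← Finset.sum_add_distrib]
  congr 1
  refine Finset.sum_congr rfl fun ℓ _ => ?_
  congr 1
  · rw [bd_shift hε hu2 hv2 s t ℓ, enorm2_pair]
  · rw [bd_shift hε hu2 hv2 s t (ℓ + 1), bd_shift hε hu2 hv2 s t ℓ,
      Prod.mk_add_mk, add_zero, enorm2_pair]
    congr 2
    ring

lemma ECB_eval (hε : ε ≠ 0) (hu2 : ∀ ℓ, (u ℓ).2 = 0) (hv2 : ∀ ℓ, (v ℓ).2 = 0)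
    (s t : ℝ) :
    ECB N ε φ (fun ℓ => yLin ε F ℓ + t • u ℓ + s • v ℓ) =
      ε * ((∑ ℓ ∈ Icc (1 : ℤ) (N : ℤ),
          φ (|F + t * Df ε (sc u) ℓ + s * Df ε (sc v) ℓ|)) +
        ∑ ℓ ∈ Icc (1 : ℤ) (N : ℤ),
          φ (|2 * F + t * (2 * Df ε (sc u) ℓ) + s * (2 * Df ε (sc v) ℓ)|)) := by
  unfold ECB
  rw [← Finset.sum_add_distrib]
  congr 1
  refine Finset.sum_congr rfl fun ℓ _ => ?_
  congr 1
  · rw [bd_shift hε hu2 hv2 s t ℓ, enorm2_pair]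
  · rw [bd_shift hε hu2 hv2 s t ℓ, enorm2_pair,
      show ∀ x : ℝ, 2 * |x| = |2 * x| from fun x => by rw [abs_mul, abs_two]]
    congr 2
    ring

end Stmt11Aux
namespace Stmt11Aux

open Real Finset

variable {φ : ℝ → ℝ} {ε F : ℝ} {N : ℕ} {u v : ℤ → ℝ × ℝ}

lemma dEa_val (hφ : ContDiffOn ℝ 2 φ (Set.Ioi 0)) (hε : ε ≠ 0) (hF : 0 < F)
    (hv2 : ∀ ℓ, (v ℓ).2 = 0) :
    dE (Ea N ε φ) (yLin ε F) v =
      ε * ((∑ ℓ ∈ Icc (1 : ℤ) (N : ℤ), deriv φ F * Df ε (sc v) ℓ) +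
        ∑ ℓ ∈ Icc (1 : ℤ) (N : ℤ),
          deriv φ (2 * F) * (Df ε (sc v) (ℓ + 1) + Df ε (sc v) ℓ)) := by
  unfold dE
  have hrw : ∀ t : ℝ, Ea N ε φ (fun ℓ => yLin ε F ℓ + t • v ℓ) =
      ε * ((∑ ℓ ∈ Icc (1 : ℤ) (N : ℤ), φ (|F + t * Df ε (sc v) ℓ|)) +
        ∑ ℓ ∈ Icc (1 : ℤ) (N : ℤ),
          φ (|2 * F + t * (Df ε (sc v) (ℓ + 1) + Df ε (sc v) ℓ)|)) := by
    intro t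
    have h := Ea_eval (u := v) (v := v) (F := F) (N := N) (φ := φ) hε hv2 hv2 0 t
    simpa using h
  simp only [hrw]
  exact d1_formula hφ ε _ (fun _ => F) (fun _ => 2 * F) (fun ℓ => Df ε (sc v) ℓ)
    (fun ℓ => Df ε (sc v) (ℓ + 1) + Df ε (sc v) ℓ) (fun i _ => hF) (fun i _ => by show (0:ℝ) < 2 * F; linarith)

lemma dECB_val (hφ : ContDiffOn ℝ 2 φ (Set.Ioi 0)) (hε : ε ≠ 0) (hF : 0 < F)
    (hv2 : ∀ ℓ, (v ℓ).2 = 0) :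
    dE (ECB N ε φ) (yLin ε F) v =
      ε * ((∑ ℓ ∈ Icc (1 : ℤ) (N : ℤ), deriv φ F * Df ε (sc v) ℓ) +
        ∑ ℓ ∈ Icc (1 : ℤ) (N : ℤ), deriv φ (2 * F) * (2 * Df ε (sc v) ℓ)) := by
  unfold dE
  have hrw : ∀ t : ℝ, ECB N ε φ (fun ℓ => yLin ε F ℓ + t • v ℓ) =
      ε * ((∑ ℓ ∈ Icc (1 : ℤ) (N : ℤ), φ (|F + t * Df ε (sc v) ℓ|)) +
        ∑ ℓ ∈ Icc (1 : ℤ) (N : ℤ), φ (|2 * F + t * (2 * Df ε (sc v) ℓ)|)) := by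
    intro t
    have h := ECB_eval (u := v) (v := v) (F := F) (N := N) (φ := φ) hε hv2 hv2 0 t
    simpa using h
  simp only [hrw]
  exact d1_formula hφ ε _ (fun _ => F) (fun _ => 2 * F) (fun ℓ => Df ε (sc v) ℓ)
    (fun ℓ => 2 * Df ε (sc v) ℓ) (fun i _ => hF) (fun i _ => by show (0:ℝ) < 2 * F; linarith)

lemma dEa_zero (hφ : ContDiffOn ℝ 2 φ (Set.Ioi 0)) (hε : ε ≠ 0) (hF : 0 < F)
    (hN : 1 ≤ N) (hv : IsDisp1D N v) :
    dE (Ea N ε φ) (yLin ε F) v = 0 := by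
  have hper : ∀ ℓ, sc v (ℓ + (N : ℤ)) = sc v ℓ := fun ℓ => by
    unfold sc; rw [hv.1.1]
  have hb := Df_periodic (ε := ε) hper
  have h0 : ∑ ℓ ∈ Icc (1 : ℤ) (N : ℤ), Df ε (sc v) ℓ = 0 := sum_Df_zero hN _ hper
  have h1 : ∑ ℓ ∈ Icc (1 : ℤ) (N : ℤ), Df ε (sc v) (ℓ + 1) =
      ∑ ℓ ∈ Icc (1 : ℤ) (N : ℤ), Df ε (sc v) ℓ := sum_shift hN _ hb
  rw [dEa_val hφ hε hF hv.2, ← Finset.mul_sum, ← Finset.mul_sum, h0,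
    Finset.sum_add_distrib, h1, h0]
  ring

lemma dECB_zero (hφ : ContDiffOn ℝ 2 φ (Set.Ioi 0)) (hε : ε ≠ 0) (hF : 0 < F)
    (hN : 1 ≤ N) (hv : IsDisp1D N v) :
    dE (ECB N ε φ) (yLin ε F) v = 0 := by
  have hper : ∀ ℓ, sc v (ℓ + (N : ℤ)) = sc v ℓ := fun ℓ => by
    unfold sc; rw [hv.1.1]
  have h0 : ∑ ℓ ∈ Icc (1 : ℤ) (N : ℤ), Df ε (sc v) ℓ = 0 := sum_Df_zero hN _ hper
  rw [dECB_val hφ hε hF hv.2, ← Finset.mul_sum, ← Finset.mul_sum, h0,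
    ← Finset.mul_sum, h0]
  ring

lemma d2Ea_val (hφ : ContDiffOn ℝ 2 φ (Set.Ioi 0)) (hε : ε ≠ 0) (hF : 0 < F)
    (hu2 : ∀ ℓ, (u ℓ).2 = 0) (hv2 : ∀ ℓ, (v ℓ).2 = 0) :
    d2E (Ea N ε φ) (yLin ε F) u v =
      ε * ((∑ ℓ ∈ Icc (1 : ℤ) (N : ℤ),
          deriv (deriv φ) F * Df ε (sc v) ℓ * Df ε (sc u) ℓ) +
        ∑ ℓ ∈ Icc (1 : ℤ) (N : ℤ),
          deriv (deriv φ) (2 * F) * (Df ε (sc v) (ℓ + 1) + Df ε (sc v) ℓ) *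
            (Df ε (sc u) (ℓ + 1) + Df ε (sc u) ℓ)) := by
  unfold d2E
  have hrw := Ea_eval (u := u) (v := v) (F := F) (N := N) (φ := φ) hε hu2 hv2
  simp only [hrw]
  exact d2_formula hφ ε _ (fun _ => F) (fun _ => 2 * F) (fun ℓ => Df ε (sc u) ℓ)
    (fun ℓ => Df ε (sc u) (ℓ + 1) + Df ε (sc u) ℓ) (fun ℓ => Df ε (sc v) ℓ)
    (fun ℓ => Df ε (sc v) (ℓ + 1) + Df ε (sc v) ℓ) (fun i _ => hF) (fun i _ => by show (0:ℝ) < 2 * F; linarith)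

lemma d2ECB_val (hφ : ContDiffOn ℝ 2 φ (Set.Ioi 0)) (hε : ε ≠ 0) (hF : 0 < F)
    (hu2 : ∀ ℓ, (u ℓ).2 = 0) (hv2 : ∀ ℓ, (v ℓ).2 = 0) :
    d2E (ECB N ε φ) (yLin ε F) u v =
      ε * ((∑ ℓ ∈ Icc (1 : ℤ) (N : ℤ),
          deriv (deriv φ) F * Df ε (sc v) ℓ * Df ε (sc u) ℓ) +
        ∑ ℓ ∈ Icc (1 : ℤ) (N : ℤ),
          deriv (deriv φ) (2 * F) * (2 * Df ε (sc v) ℓ) * (2 * Df ε (sc u) ℓ)) := by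
  unfold d2E
  have hrw := ECB_eval (u := u) (v := v) (F := F) (N := N) (φ := φ) hε hu2 hv2
  simp only [hrw]
  exact d2_formula hφ ε _ (fun _ => F) (fun _ => 2 * F) (fun ℓ => Df ε (sc u) ℓ)
    (fun ℓ => 2 * Df ε (sc u) ℓ) (fun ℓ => Df ε (sc v) ℓ)
    (fun ℓ => 2 * Df ε (sc v) ℓ) (fun i _ => hF) (fun i _ => by show (0:ℝ) < 2 * F; linarith)

end Stmt11Aux
namespace Stmt11Aux

open Real Finset

lemma identity1 {N : ℕ} (hN : 1 ≤ N) (p w : ℤ → ℝ)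
    (hp : ∀ ℓ, p (ℓ + (N : ℤ)) = p ℓ) (hw : ∀ ℓ, w (ℓ + (N : ℤ)) = w ℓ) :
    ∑ ℓ ∈ Icc (1 : ℤ) (N : ℤ), (w (ℓ + 1) + w ℓ) * (p (ℓ + 1) + p ℓ)
      = 4 * (∑ ℓ ∈ Icc (1 : ℤ) (N : ℤ), w ℓ * p ℓ)
        - ∑ ℓ ∈ Icc (1 : ℤ) (N : ℤ), (p (ℓ + 1) - p ℓ) * (w (ℓ + 1) - w ℓ) := by
  have h1 : ∑ ℓ ∈ Icc (1 : ℤ) (N : ℤ), w (ℓ + 1) * p (ℓ + 1)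
      = ∑ ℓ ∈ Icc (1 : ℤ) (N : ℤ), w ℓ * p ℓ :=
    sum_shift hN (fun ℓ => w ℓ * p ℓ) (fun ℓ => by
      show w (ℓ + (N : ℤ)) * p (ℓ + (N : ℤ)) = w ℓ * p ℓ; rw [hw, hp])
  have key : ∑ ℓ ∈ Icc (1 : ℤ) (N : ℤ),
        ((w (ℓ + 1) + w ℓ) * (p (ℓ + 1) + p ℓ) + (p (ℓ + 1) - p ℓ) * (w (ℓ + 1) - w ℓ))
      = ∑ ℓ ∈ Icc (1 : ℤ) (N : ℤ), (2 * (w (ℓ + 1) * p (ℓ + 1)) + 2 * (w ℓ * p ℓ)) :=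
    Finset.sum_congr rfl fun ℓ _ => by ring
  rw [Finset.sum_add_distrib, Finset.sum_add_distrib, ← Finset.mul_sum, ← Finset.mul_sum, h1]
    at key
  linarith

lemma identity2 {N : ℕ} (hN : 1 ≤ N) (p w : ℤ → ℝ)
    (hp : ∀ ℓ, p (ℓ + (N : ℤ)) = p ℓ) (hw : ∀ ℓ, w (ℓ + (N : ℤ)) = w ℓ) :
    ∑ ℓ ∈ Icc (1 : ℤ) (N : ℤ), (p (ℓ + 1) - p ℓ) * (w (ℓ + 1) - w ℓ)
      = -∑ ℓ ∈ Icc (1 : ℤ) (N : ℤ), (p (ℓ + 1) - 2 * p ℓ + p (ℓ - 1)) * w ℓ := by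
  have h1 : ∑ ℓ ∈ Icc (1 : ℤ) (N : ℤ), p (ℓ + 1) * w (ℓ + 1)
      = ∑ ℓ ∈ Icc (1 : ℤ) (N : ℤ), p ℓ * w ℓ :=
    sum_shift hN (fun ℓ => p ℓ * w ℓ) (fun ℓ => by
      show p (ℓ + (N : ℤ)) * w (ℓ + (N : ℤ)) = p ℓ * w ℓ; rw [hw, hp])
  have h2 : ∑ ℓ ∈ Icc (1 : ℤ) (N : ℤ), p ℓ * w (ℓ + 1)
      = ∑ ℓ ∈ Icc (1 : ℤ) (N : ℤ), p (ℓ - 1) * w ℓ := by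
    have h := sum_shift hN (fun ℓ => p (ℓ - 1) * w ℓ) (fun ℓ => by
      show p (ℓ + (N : ℤ) - 1) * w (ℓ + (N : ℤ)) = p (ℓ - 1) * w ℓ
      rw [show ℓ + (N : ℤ) - 1 = (ℓ - 1) + N by ring, hp, hw])
    simpa using h
  have eL : ∑ ℓ ∈ Icc (1 : ℤ) (N : ℤ), (p (ℓ + 1) - p ℓ) * (w (ℓ + 1) - w ℓ)
      = (∑ ℓ ∈ Icc (1 : ℤ) (N : ℤ), p (ℓ + 1) * w (ℓ + 1))
        - (∑ ℓ ∈ Icc (1 : ℤ) (N : ℤ), p (ℓ + 1) * w ℓ)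
        - (∑ ℓ ∈ Icc (1 : ℤ) (N : ℤ), p ℓ * w (ℓ + 1))
        + ∑ ℓ ∈ Icc (1 : ℤ) (N : ℤ), p ℓ * w ℓ := by
    rw [← Finset.sum_sub_distrib, ← Finset.sum_sub_distrib, ← Finset.sum_add_distrib]
    exact Finset.sum_congr rfl fun ℓ _ => by ring
  have eR : ∑ ℓ ∈ Icc (1 : ℤ) (N : ℤ), (p (ℓ + 1) - 2 * p ℓ + p (ℓ - 1)) * w ℓ
      = (∑ ℓ ∈ Icc (1 : ℤ) (N : ℤ), p (ℓ + 1) * w ℓ)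
        - 2 * (∑ ℓ ∈ Icc (1 : ℤ) (N : ℤ), p ℓ * w ℓ)
        + ∑ ℓ ∈ Icc (1 : ℤ) (N : ℤ), p (ℓ - 1) * w ℓ := by
    rw [Finset.mul_sum, ← Finset.sum_sub_distrib, ← Finset.sum_add_distrib]
    exact Finset.sum_congr rfl fun ℓ _ => by ring
  rw [eL, eR, h1, h2]
  ring

lemma DfDf {ε : ℝ} (hε : ε ≠ 0) (g : ℤ → ℝ) (ℓ : ℤ) :
    g (ℓ + 1) - 2 * g ℓ + g (ℓ - 1) = ε ^ 2 * Df ε (Df ε g) (ℓ + 1) := by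
  unfold Df
  simp only [add_sub_cancel_right]
  field_simp
  ring

end Stmt11Aux
open Stmt11Aux in
theorem stmt_11 (N : ℕ) (hN : 4 ≤ N) (ε : ℝ) (hε : ε = (N : ℝ)⁻¹)
    (φ : ℝ → ℝ) (hφ : ContDiffOn ℝ 2 φ (Set.Ioi 0)) (F : ℝ) (hF : 0 < F)
    (hγ : 0 < deriv (deriv φ) F + 4 * deriv (deriv φ) (2 * F))
    (f ua uCB : ℤ → ℝ × ℝ) (hf : IsDisp1D N f) (hua : IsDisp1D N ua)
    (huCB : IsDisp1D N uCB)
    (heqa : ∀ v : ℤ → ℝ × ℝ, IsDisp1D N v →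
      dE (Ea N ε φ) (yLin ε F) v + d2E (Ea N ε φ) (yLin ε F) ua v = ip N ε f v)
    (heqCB : ∀ v : ℤ → ℝ × ℝ, IsDisp1D N v →
      dE (ECB N ε φ) (yLin ε F) v + d2E (ECB N ε φ) (yLin ε F) uCB v = ip N ε f v) :
    nrm N ε (bd ε (fun ℓ => ua ℓ - uCB ℓ)) ≤
      ε ^ 2 * |deriv (deriv φ) (2 * F)| /
        (deriv (deriv φ) F + 4 * deriv (deriv φ) (2 * F)) *
        nrm N ε (bd ε (bd ε (bd ε ua))) := by
  have hNpos : (0 : ℝ) < N := by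
    have : (4 : ℝ) ≤ N := by exact_mod_cast hN
    linarith
  have hεpos : 0 < ε := by rw [hε]; exact inv_pos.2 hNpos
  have hεne : ε ≠ 0 := ne_of_gt hεpos
  have hN1 : 1 ≤ N := by omega
  set c1 := deriv (deriv φ) F with hc1
  set c2 := deriv (deriv φ) (2 * F) with hc2
  set v : ℤ → ℝ × ℝ := fun ℓ => ua ℓ - uCB ℓ with hvdef
  have hv1D : IsDisp1D N v := by
    refine ⟨⟨fun ℓ => ?_, ?_⟩, fun ℓ => ?_⟩
    · show ua (ℓ + (N : ℤ)) - uCB (ℓ + (N : ℤ)) = ua ℓ - uCB ℓ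
      rw [hua.1.1, huCB.1.1]
    · show ∑ ℓ ∈ Finset.Icc (1 : ℤ) (N : ℤ), (ua ℓ - uCB ℓ) = 0
      rw [Finset.sum_sub_distrib, hua.1.2, huCB.1.2, sub_zero]
    · show (ua ℓ - uCB ℓ).2 = 0
      simp [hua.2, huCB.2]
  have hEq1 := heqa v hv1D
  have hEq2 := heqCB v hv1D
  rw [dEa_zero hφ hεne hF hN1 hv1D, zero_add, d2Ea_val hφ hεne hF hua.2 hv1D.2] at hEq1
  rw [dECB_zero hφ hεne hF hN1 hv1D, zero_add, d2ECB_val hφ hεne hF huCB.2 hv1D.2] at hEq2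
  set a := Df ε (sc ua) with ha
  set q := Df ε (sc uCB) with hq
  set b := Df ε (sc v) with hb
  set S := Finset.Icc (1 : ℤ) (N : ℤ) with hS
  set w : ℤ → ℝ := fun ℓ => a ℓ - q ℓ with hwdef
  set T : ℤ → ℝ := Df ε (Df ε a) with hT
  have hbw : ∀ ℓ, b ℓ = w ℓ := by
    intro ℓ
    rw [hb, hwdef, ha, hq]
    unfold Df sc
    show ε⁻¹ * ((ua ℓ - uCB ℓ).1 - (ua (ℓ - 1) - uCB (ℓ - 1)).1) = _
    simp only [Prod.fst_sub]
    ring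
  -- periodicity of scalar quantities
  have hsca : ∀ ℓ, sc ua (ℓ + (N : ℤ)) = sc ua ℓ := fun ℓ => by
    unfold sc; rw [hua.1.1]
  have hscq : ∀ ℓ, sc uCB (ℓ + (N : ℤ)) = sc uCB ℓ := fun ℓ => by
    unfold sc; rw [huCB.1.1]
  have hpa : ∀ ℓ, a (ℓ + (N : ℤ)) = a ℓ := fun ℓ => by
    rw [ha]; exact Df_periodic hsca ℓ
  have hpq : ∀ ℓ, q (ℓ + (N : ℤ)) = q ℓ := fun ℓ => by
    rw [hq]; exact Df_periodic hscq ℓ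
  have hpw : ∀ ℓ, w (ℓ + (N : ℤ)) = w ℓ := fun ℓ => by
    rw [hwdef]; show a (ℓ + (N : ℤ)) - q (ℓ + (N : ℤ)) = a ℓ - q ℓ; rw [hpa, hpq]
  have hpT : ∀ ℓ, T (ℓ + (N : ℤ)) = T ℓ := fun ℓ => by
    rw [hT]; exact Df_periodic (Df_periodic hpa) ℓ
  -- the five scalar equations
  have hsub : (∑ ℓ ∈ S, c1 * b ℓ * a ℓ) +
      (∑ ℓ ∈ S, c2 * (b (ℓ + 1) + b ℓ) * (a (ℓ + 1) + a ℓ)) =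
      (∑ ℓ ∈ S, c1 * b ℓ * q ℓ) + ∑ ℓ ∈ S, c2 * (2 * b ℓ) * (2 * q ℓ) :=
    mul_left_cancel₀ hεne (hEq1.trans hEq2.symm)
  have e1 : ∑ ℓ ∈ S, c1 * b ℓ * a ℓ = c1 * ∑ ℓ ∈ S, w ℓ * a ℓ := by
    rw [Finset.mul_sum]
    exact Finset.sum_congr rfl fun ℓ _ => by rw [hbw ℓ]; ring
  have e2 : ∑ ℓ ∈ S, c2 * (b (ℓ + 1) + b ℓ) * (a (ℓ + 1) + a ℓ) =
      c2 * ∑ ℓ ∈ S, (w (ℓ + 1) + w ℓ) * (a (ℓ + 1) + a ℓ) := by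
    rw [Finset.mul_sum]
    exact Finset.sum_congr rfl fun ℓ _ => by rw [hbw ℓ, hbw (ℓ + 1)]; ring
  have e3 : ∑ ℓ ∈ S, c1 * b ℓ * q ℓ = c1 * ∑ ℓ ∈ S, w ℓ * q ℓ := by
    rw [Finset.mul_sum]
    exact Finset.sum_congr rfl fun ℓ _ => by rw [hbw ℓ]; ring
  have e4 : ∑ ℓ ∈ S, c2 * (2 * b ℓ) * (2 * q ℓ) = 4 * c2 * ∑ ℓ ∈ S, w ℓ * q ℓ := by
    rw [Finset.mul_sum]
    exact Finset.sum_congr rfl fun ℓ _ => by rw [hbw ℓ]; ring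
  rw [e1, e2, e3, e4] at hsub
  have h1 : ∑ ℓ ∈ S, (w (ℓ + 1) + w ℓ) * (a (ℓ + 1) + a ℓ) =
      4 * (∑ ℓ ∈ S, w ℓ * a ℓ) - ∑ ℓ ∈ S, (a (ℓ + 1) - a ℓ) * (w (ℓ + 1) - w ℓ) :=
    identity1 hN1 a w hpa hpw
  have h2 : ∑ ℓ ∈ S, (a (ℓ + 1) - a ℓ) * (w (ℓ + 1) - w ℓ) =
      -∑ ℓ ∈ S, (a (ℓ + 1) - 2 * a ℓ + a (ℓ - 1)) * w ℓ :=
    identity2 hN1 a w hpa hpw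
  have h4 : ∑ ℓ ∈ S, (a (ℓ + 1) - 2 * a ℓ + a (ℓ - 1)) * w ℓ =
      ε ^ 2 * ∑ ℓ ∈ S, T (ℓ + 1) * w ℓ := by
    rw [Finset.mul_sum]
    refine Finset.sum_congr rfl fun ℓ _ => ?_
    rw [DfDf hεne a ℓ, hT]
    ring
  have h5 : (∑ ℓ ∈ S, w ℓ * a ℓ) - ∑ ℓ ∈ S, w ℓ * q ℓ = ∑ ℓ ∈ S, w ℓ ^ 2 := by
    rw [← Finset.sum_sub_distrib]
    refine Finset.sum_congr rfl fun ℓ _ => ?_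
    rw [hwdef]
    show w ℓ * a ℓ - w ℓ * q ℓ = (a ℓ - q ℓ) ^ 2
    rw [show w ℓ = a ℓ - q ℓ from rfl]
    ring
  set A := ∑ ℓ ∈ S, w ℓ ^ 2 with hA
  set U := ∑ ℓ ∈ S, T (ℓ + 1) * w ℓ with hU
  have hkey : (c1 + 4 * c2) * A = -(c2 * (ε ^ 2 * U)) := by
    linear_combination hsub - (c1 + 4 * c2) * h5 - c2 * h1 + c2 * h2 - c2 * h4
  -- Cauchy-Schwarz
  set B := ∑ ℓ ∈ S, T ℓ ^ 2 with hB
  have hA0 : 0 ≤ A := Finset.sum_nonneg fun ℓ _ => sq_nonneg _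
  have hB0 : 0 ≤ B := Finset.sum_nonneg fun ℓ _ => sq_nonneg _
  have hTs : ∑ ℓ ∈ S, T (ℓ + 1) ^ 2 = B :=
    sum_shift hN1 (fun ℓ => T ℓ ^ 2) (fun ℓ => by
      show T (ℓ + (N : ℤ)) ^ 2 = T ℓ ^ 2; rw [hpT])
  have hCS : U ^ 2 ≤ (∑ ℓ ∈ S, T (ℓ + 1) ^ 2) * A :=
    Finset.sum_mul_sq_le_sq_mul_sq S _ _
  have hUbd : |U| ≤ Real.sqrt B * Real.sqrt A := by
    rw [← Real.sqrt_sq_eq_abs]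
    calc Real.sqrt (U ^ 2) ≤ Real.sqrt ((∑ ℓ ∈ S, T (ℓ + 1) ^ 2) * A) :=
          Real.sqrt_le_sqrt hCS
      _ = Real.sqrt B * Real.sqrt A := by rw [hTs, Real.sqrt_mul hB0]
  have hγA : (c1 + 4 * c2) * A ≤ |c2| * ε ^ 2 * (Real.sqrt B * Real.sqrt A) := by
    calc (c1 + 4 * c2) * A = -(c2 * (ε ^ 2 * U)) := hkey
      _ ≤ |c2 * (ε ^ 2 * U)| := neg_le_abs _
      _ = |c2| * (ε ^ 2 * |U|) := by
          rw [abs_mul, abs_mul, abs_of_nonneg (sq_nonneg ε)]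
      _ ≤ |c2| * (ε ^ 2 * (Real.sqrt B * Real.sqrt A)) := by
          have := mul_le_mul_of_nonneg_left hUbd (sq_nonneg ε)
          exact mul_le_mul_of_nonneg_left this (abs_nonneg _)
      _ = |c2| * ε ^ 2 * (Real.sqrt B * Real.sqrt A) := by ring
  -- norms
  have hbdv : ∀ ℓ, bd ε v ℓ = (w ℓ, 0) := fun ℓ => by
    rw [bd_eq hv1D.2 ℓ, ← hb, hbw]
  have hbd3 : ∀ ℓ, bd ε (bd ε (bd ε ua)) ℓ = (T ℓ, 0) := by
    have k1 : ∀ ℓ, bd ε ua ℓ = (a ℓ, 0) := fun ℓ => by rw [bd_eq hua.2 ℓ, ← ha]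
    have k1' : ∀ ℓ, (bd ε ua ℓ).2 = 0 := fun ℓ => by rw [k1 ℓ]
    have ksc1 : sc (bd ε ua) = a := funext fun ℓ => by
      unfold sc; rw [k1 ℓ]
    have k2 : ∀ ℓ, bd ε (bd ε ua) ℓ = (Df ε a ℓ, 0) := fun ℓ => by
      rw [bd_eq k1' ℓ, ksc1]
    have k2' : ∀ ℓ, (bd ε (bd ε ua) ℓ).2 = 0 := fun ℓ => by rw [k2 ℓ]
    have ksc2 : sc (bd ε (bd ε ua)) = Df ε a := funext fun ℓ => by
      unfold sc; rw [k2 ℓ]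
    intro ℓ
    rw [bd_eq k2' ℓ, ksc2, ← hT]
  have hnrm1 : nrm N ε (bd ε v) = Real.sqrt ε * Real.sqrt A := by
    unfold nrm
    rw [show ∑ ℓ ∈ Finset.Icc (1 : ℤ) (N : ℤ), enorm2 (bd ε v ℓ) ^ 2 = A from
      Finset.sum_congr rfl fun ℓ _ => by rw [hbdv ℓ, enorm2_pair, sq_abs]]
    rw [Real.sqrt_mul hεpos.le]
  have hnrm2 : nrm N ε (bd ε (bd ε (bd ε ua))) = Real.sqrt ε * Real.sqrt B := by
    unfold nrm
    rw [show ∑ ℓ ∈ Finset.Icc (1 : ℤ) (N : ℤ), enorm2 (bd ε (bd ε (bd ε ua)) ℓ) ^ 2 = B from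
      Finset.sum_congr rfl fun ℓ _ => by rw [hbd3 ℓ, enorm2_pair, sq_abs]]
    rw [Real.sqrt_mul hεpos.le]
  show nrm N ε (bd ε v) ≤ ε ^ 2 * |c2| / (c1 + 4 * c2) * nrm N ε (bd ε (bd ε (bd ε ua)))
  rw [hnrm1, hnrm2]
  have hmain : Real.sqrt A ≤ ε ^ 2 * |c2| / (c1 + 4 * c2) * Real.sqrt B := by
    rcases eq_or_lt_of_le (Real.sqrt_nonneg A) with hA1 | hA1
    · rw [← hA1]
      positivity
    · have hAA : A = Real.sqrt A * Real.sqrt A := (Real.mul_self_sqrt hA0).symm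
      have step : (c1 + 4 * c2) * Real.sqrt A ≤ |c2| * ε ^ 2 * Real.sqrt B := by
        have h' : ((c1 + 4 * c2) * Real.sqrt A) * Real.sqrt A ≤
            (|c2| * ε ^ 2 * Real.sqrt B) * Real.sqrt A := by
          calc ((c1 + 4 * c2) * Real.sqrt A) * Real.sqrt A
              = (c1 + 4 * c2) * (Real.sqrt A * Real.sqrt A) := by ring
            _ = (c1 + 4 * c2) * A := by rw [Real.mul_self_sqrt hA0]
            _ ≤ |c2| * ε ^ 2 * (Real.sqrt B * Real.sqrt A) := hγA
            _ = (|c2| * ε ^ 2 * Real.sqrt B) * Real.sqrt A := by ring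
        exact le_of_mul_le_mul_right h' hA1
      rw [div_mul_eq_mul_div, le_div_iff₀ hγ]
      linarith [step]
  calc Real.sqrt ε * Real.sqrt A ≤ Real.sqrt ε *
        (ε ^ 2 * |c2| / (c1 + 4 * c2) * Real.sqrt B) :=
        mul_le_mul_of_nonneg_left hmain (Real.sqrt_nonneg ε)
    _ = ε ^ 2 * |c2| / (c1 + 4 * c2) * (Real.sqrt ε * Real.sqrt B) := by ring
end
end
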